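/- There exist constants 0 < c ≤ C and r₀ > 1 such that for all r ≥ r₀, c·(log r)^((β+2)/2) ≤ ρ(r) ≤ C·(log r)^((β+2)/2). -/

import Mathlib

open Real

noncomputable def Gf (α β t : ℝ) : ℝ :=
  (α + Real.log (1 + t ^ 2)) ^ (β / 2) / (α ^ (β / 2) * Real.sqrt (1 + t ^ 2))

noncomputable def Ff (α β t : ℝ) : ℝ := (α + Real.log (1 + t ^ 2)) ^ ((β + 2) / 2)

noncomputable def Df (α β t : ℝ) : ℝ :=
  (β + 2) * (α + Real.log (1 + t ^ 2)) ^ (β / 2) * (t / (1 + t ^ 2))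

lemma Apos (α : ℝ) (hα : 0 < α) (t : ℝ) : 0 < α + Real.log (1 + t ^ 2) := by
  have := Real.log_nonneg (by nlinarith : (1:ℝ) ≤ 1 + t ^ 2)
  linarith

lemma gval (α β : ℝ) (hα : 0 < α) (t : ℝ) :
    Real.sqrt ((α + Real.log (1 + t ^ 2)) ^ β / (α ^ β * (1 + t ^ 2))) = Gf α β t := by
  have h1 : (0:ℝ) < 1 + t ^ 2 := by positivity
  have hA := Apos α hα t
  unfold Gf
  rw [Real.sqrt_div (by positivity), Real.sqrt_mul (by positivity : (0:ℝ) ≤ α ^ β)]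
  congr 1
  · rw [Real.sqrt_eq_rpow, ← Real.rpow_mul hA.le]
    norm_num
    ring_nf
  · congr 1
    rw [Real.sqrt_eq_rpow, ← Real.rpow_mul hα.le]
    norm_num
    ring_nf

lemma contA : Continuous fun t : ℝ => Real.log (1 + t ^ 2) := by
  apply Continuous.log (by continuity)
  intro t; positivity

lemma contG (α β : ℝ) (hα : 0 < α) : Continuous (Gf α β) := by
  apply Continuous.div
  · exact (continuous_const.add contA).rpow_const (fun t => Or.inl (Apos α hα t).ne')
  · exact continuous_const.mul (Real.continuous_sqrt.comp (by continuity))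
  · intro t
    have : 0 < Real.sqrt (1 + t ^ 2) := Real.sqrt_pos.2 (by positivity)
    have : 0 < α ^ (β/2) := Real.rpow_pos_of_pos hα _
    positivity

lemma contD (α β : ℝ) (hα : 0 < α) : Continuous (Df α β) := by
  apply Continuous.mul
  · exact continuous_const.mul
      ((continuous_const.add contA).rpow_const (fun t => Or.inl (Apos α hα t).ne'))
  · exact Continuous.div continuous_id (by continuity) (fun t => by positivity)

lemma derivF (α β : ℝ) (hα : 0 < α) (t : ℝ) : HasDerivAt (Ff α β) (Df α β t) t := by
  have h1 : (0:ℝ) < 1 + t ^ 2 := by positivity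
  have hd1 : HasDerivAt (fun t : ℝ => 1 + t ^ 2) (2 * t) t := by
    simpa using (hasDerivAt_pow 2 t).const_add 1
  have hd2 : HasDerivAt (fun t : ℝ => α + Real.log (1 + t ^ 2)) (2 * t / (1 + t ^ 2)) t :=
    (hd1.log h1.ne').const_add α
  have hd3 := hd2.rpow_const (p := (β + 2) / 2) (Or.inl (Apos α hα t).ne')
  have he : (β + 2) / 2 - 1 = β / 2 := by ring
  rw [he] at hd3
  have : Df α β t = 2 * t / (1 + t ^ 2) * ((β + 2) / 2) * (α + Real.log (1 + t ^ 2)) ^ (β / 2) := by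
    unfold Df; ring
  rw [this]
  exact hd3

lemma ftcF (α β : ℝ) (hα : 0 < α) (a b : ℝ) :
    (∫ t in a..b, Df α β t) = Ff α β b - Ff α β a :=
  intervalIntegral.integral_eq_sub_of_hasDerivAt (fun t _ => derivF α β hα t)
    ((contD α β hα).intervalIntegrable a b)

lemma low_pt (α β : ℝ) (hα : 0 < α) (hβ : 0 ≤ β) (t : ℝ) (ht : 0 ≤ t) :
    Df α β t ≤ ((β + 2) * α ^ (β / 2)) * Gf α β t := by
  have h1 : (0:ℝ) < 1 + t ^ 2 := by positivity
  have hs : 0 < Real.sqrt (1 + t ^ 2) := Real.sqrt_pos.2 h1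
  have hA := Apos α hα t
  have hAp : 0 < (α + Real.log (1 + t ^ 2)) ^ (β / 2) := Real.rpow_pos_of_pos hA _
  have hαp : 0 < α ^ (β / 2) := Real.rpow_pos_of_pos hα _
  have hts : t ≤ Real.sqrt (1 + t ^ 2) := by
    calc t = Real.sqrt (t ^ 2) := (Real.sqrt_sq ht).symm
    _ ≤ Real.sqrt (1 + t ^ 2) := Real.sqrt_le_sqrt (by linarith)
  have hsq : Real.sqrt (1 + t ^ 2) * Real.sqrt (1 + t ^ 2) = 1 + t ^ 2 :=
    Real.mul_self_sqrt h1.le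
  have hkey : t / (1 + t ^ 2) ≤ 1 / Real.sqrt (1 + t ^ 2) := by
    rw [div_le_div_iff₀ h1 hs]
    nlinarith
  have heq : ((β + 2) * α ^ (β / 2)) * Gf α β t =
      (β + 2) * (α + Real.log (1 + t ^ 2)) ^ (β / 2) * (1 / Real.sqrt (1 + t ^ 2)) := by
    unfold Gf; field_simp
  rw [heq]
  unfold Df
  exact mul_le_mul_of_nonneg_left hkey (by positivity)

lemma up_pt (α β : ℝ) (hα : 0 < α) (hβ : 0 ≤ β) (t : ℝ) (ht : 1 ≤ t) :
    ((β + 2) * α ^ (β / 2)) * Gf α β t ≤ Real.sqrt 2 * Df α β t := by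
  have ht0 : (0:ℝ) < t := lt_of_lt_of_le one_pos ht
  have h1 : (0:ℝ) < 1 + t ^ 2 := by positivity
  have hs : 0 < Real.sqrt (1 + t ^ 2) := Real.sqrt_pos.2 h1
  have hA := Apos α hα t
  have hAp : 0 < (α + Real.log (1 + t ^ 2)) ^ (β / 2) := Real.rpow_pos_of_pos hA _
  have hαp : 0 < α ^ (β / 2) := Real.rpow_pos_of_pos hα _
  have hsq : Real.sqrt (1 + t ^ 2) * Real.sqrt (1 + t ^ 2) = 1 + t ^ 2 :=
    Real.mul_self_sqrt h1.le
  have hst : Real.sqrt (1 + t ^ 2) ≤ Real.sqrt 2 * t := by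
    calc Real.sqrt (1 + t ^ 2) ≤ Real.sqrt (2 * t ^ 2) := Real.sqrt_le_sqrt (by nlinarith)
    _ = Real.sqrt 2 * t := by
        rw [Real.sqrt_mul (by norm_num : (0:ℝ) ≤ 2), Real.sqrt_sq ht0.le]
  have hkey : 1 / Real.sqrt (1 + t ^ 2) ≤ Real.sqrt 2 * (t / (1 + t ^ 2)) := by
    rw [mul_div_assoc'] at *
    rw [div_le_div_iff₀ hs h1]
    nlinarith
  have heq : ((β + 2) * α ^ (β / 2)) * Gf α β t =
      (β + 2) * (α + Real.log (1 + t ^ 2)) ^ (β / 2) * (1 / Real.sqrt (1 + t ^ 2)) := by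
    unfold Gf; field_simp
  rw [heq]
  have : Real.sqrt 2 * Df α β t =
      (β + 2) * (α + Real.log (1 + t ^ 2)) ^ (β / 2) * (Real.sqrt 2 * (t / (1 + t ^ 2))) := by
    unfold Df; ring
  rw [this]
  exact mul_le_mul_of_nonneg_left hkey (by positivity)

lemma G01 (α β : ℝ) (hα : 0 < α) (hβ : 0 ≤ β) (t : ℝ) (ht : t ∈ Set.Icc (0:ℝ) 1) :
    Gf α β t ≤ (α + Real.log 2) ^ (β / 2) / α ^ (β / 2) := by
  have h1 : (0:ℝ) < 1 + t ^ 2 := by positivity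
  have hA := Apos α hα t
  have hαp : 0 < α ^ (β / 2) := Real.rpow_pos_of_pos hα _
  have hs1 : 1 ≤ Real.sqrt (1 + t ^ 2) := by
    calc (1:ℝ) = Real.sqrt 1 := (Real.sqrt_one).symm
    _ ≤ Real.sqrt (1 + t ^ 2) := Real.sqrt_le_sqrt (by nlinarith)
  have hnum : (α + Real.log (1 + t ^ 2)) ^ (β / 2) ≤ (α + Real.log 2) ^ (β / 2) := by
    apply Real.rpow_le_rpow hA.le _ (by positivity)
    have : Real.log (1 + t ^ 2) ≤ Real.log 2 :=
      Real.log_le_log h1 (by nlinarith [ht.2, ht.1])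
    linarith
  unfold Gf
  apply div_le_div₀ (by positivity) hnum hαp
  nlinarith [hαp]

noncomputable def rhoFJ (α β : ℝ) (r : ℝ) : ℝ :=
  ∫ t in (0:ℝ)..r, Real.sqrt ((α + Real.log (1 + t ^ 2)) ^ β / (α ^ β * (1 + t ^ 2)))

set_option maxHeartbeats 1000000 in
theorem stmt_14 (α β : ℝ) (hβ : 0 ≤ β) (hαβ : β < α) :
    ∃ c C r₀ : ℝ, 0 < c ∧ c ≤ C ∧ 1 < r₀ ∧
      ∀ r : ℝ, r₀ ≤ r →
        c * (Real.log r) ^ ((β + 2) / 2) ≤ rhoFJ α β r ∧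
        rhoFJ α β r ≤ C * (Real.log r) ^ ((β + 2) / 2) := by
  have hα : 0 < α := lt_of_le_of_lt hβ hαβ
  set k : ℝ := (β + 2) / 2 with hk
  have hk1 : 1 ≤ k := by rw [hk]; linarith
  have hk0 : 0 ≤ k := by linarith
  set c₀ : ℝ := (β + 2) * α ^ (β / 2) with hc₀
  have hαp : 0 < α ^ (β / 2) := Real.rpow_pos_of_pos hα _
  have hc₀pos : 0 < c₀ := by positivity
  set M : ℝ := (α + Real.log 2) ^ (β / 2) / α ^ (β / 2) with hM
  have hlog2 : 0 < Real.log 2 := Real.log_pos (by norm_num)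
  have hMnn : 0 ≤ M := by
    have h2 : (0:ℝ) < (α + Real.log 2) ^ (β / 2) := Real.rpow_pos_of_pos (by linarith) _
    positivity
  have h4k : (4:ℝ) ≤ 4 ^ k := by
    calc (4:ℝ) = 4 ^ (1:ℝ) := by rw [Real.rpow_one]
    _ ≤ 4 ^ k := Real.rpow_le_rpow_of_exponent_le (by norm_num) hk1
  have hs2 : (1:ℝ) ≤ Real.sqrt 2 := by
    rw [show (1:ℝ) = Real.sqrt 1 by simp]
    exact Real.sqrt_le_sqrt (by norm_num)
  refine ⟨1 / (2 * c₀), M + Real.sqrt 2 * 4 ^ k / c₀, Real.exp (2 * α + 1), by positivity,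
    ?_, ?_, ?_⟩
  · have h12 : (1:ℝ) / 2 ≤ Real.sqrt 2 * 4 ^ k := by nlinarith
    have hle : 1 / (2 * c₀) ≤ Real.sqrt 2 * 4 ^ k / c₀ := by
      rw [div_le_div_iff₀ (by positivity) hc₀pos]
      nlinarith [mul_le_mul_of_nonneg_right h12 hc₀pos.le]
    linarith
  · calc (1:ℝ) = Real.exp 0 := (Real.exp_zero).symm
    _ < Real.exp (2 * α + 1) := Real.exp_lt_exp.2 (by linarith)
  · intro r hr
    have hrexp : (0:ℝ) < Real.exp (2 * α + 1) := Real.exp_pos _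
    have hrpos : 0 < r := lt_of_lt_of_le hrexp hr
    have hlogr : 2 * α + 1 ≤ Real.log r := by
      calc 2 * α + 1 = Real.log (Real.exp (2 * α + 1)) := (Real.log_exp _).symm
      _ ≤ Real.log r := Real.log_le_log hrexp hr
    have hlog1 : 1 ≤ Real.log r := by linarith
    have hr1 : 1 ≤ r := by
      by_contra h
      push_neg at h
      have := Real.log_nonpos hrpos.le h.le
      linarith
    set L : ℝ := Real.log r ^ k with hL
    have hLpos : 0 < L := Real.rpow_pos_of_pos (by linarith) _
    have hL1 : 1 ≤ L := by
      calc (1:ℝ) = 1 ^ k := (Real.one_rpow k).symm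
      _ ≤ L := Real.rpow_le_rpow zero_le_one hlog1 hk0
    -- rewrite rho as integral of Gf
    have hrho : rhoFJ α β r = ∫ t in (0:ℝ)..r, Gf α β t :=
      intervalIntegral.integral_congr (fun t _ => gval α β hα t)
    have hGi : ∀ a b : ℝ, IntervalIntegrable (Gf α β) MeasureTheory.volume a b :=
      fun a b => (contG α β hα).intervalIntegrable a b
    have hDi : ∀ a b : ℝ, IntervalIntegrable (Df α β) MeasureTheory.volume a b :=
      fun a b => (contD α β hα).intervalIntegrable a b
    -- bounds on Ff
    have hA := Apos α hα r
    have hFr_low : L ≤ Ff α β r := by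
      apply Real.rpow_le_rpow (Real.log_nonneg hr1) _ hk0
      have : Real.log r ≤ Real.log (1 + r ^ 2) := Real.log_le_log hrpos (by nlinarith)
      linarith
    have hF0 : Ff α β 0 = α ^ k := by
      unfold Ff; norm_num; rfl
    have hα2k : 2 * α ^ k ≤ L := by
      have h1 : (2 * α) ^ k ≤ L := Real.rpow_le_rpow (by linarith) (by linarith) hk0
      have h2 : (2 * α) ^ k = 2 ^ k * α ^ k := Real.mul_rpow (by norm_num) hα.le
      have h3 : (2:ℝ) ≤ 2 ^ k := by
        calc (2:ℝ) = 2 ^ (1:ℝ) := by rw [Real.rpow_one]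
        _ ≤ 2 ^ k := Real.rpow_le_rpow_of_exponent_le one_le_two hk1
      have h4 : 0 ≤ α ^ k := (Real.rpow_pos_of_pos hα k).le
      nlinarith
    have hFr_up : Ff α β r ≤ 4 ^ k * L := by
      have hlog : Real.log (1 + r ^ 2) ≤ Real.log 2 + 2 * Real.log r := by
        calc Real.log (1 + r ^ 2) ≤ Real.log (2 * r ^ 2) :=
          Real.log_le_log (by positivity) (by nlinarith)
        _ = Real.log 2 + 2 * Real.log r := by
          rw [Real.log_mul (by norm_num) (by positivity), Real.log_pow]
          norm_num
      have hlog2' : Real.log 2 < 1 := by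
        have := Real.log_two_lt_d9
        linarith
      have hbase : α + Real.log (1 + r ^ 2) ≤ 4 * Real.log r := by linarith
      calc Ff α β r ≤ (4 * Real.log r) ^ k := Real.rpow_le_rpow hA.le hbase hk0
      _ = 4 ^ k * L := Real.mul_rpow (by norm_num) (Real.log_nonneg hr1)
    -- LOWER BOUND
    have hmono1 : (∫ t in (0:ℝ)..r, Df α β t) ≤ ∫ t in (0:ℝ)..r, c₀ * Gf α β t := by
      apply intervalIntegral.integral_mono_on hrpos.le (hDi 0 r)
        ((hGi 0 r).const_mul c₀)
      intro t ht
      exact low_pt α β hα hβ t ht.1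
    have hcm : (∫ t in (0:ℝ)..r, c₀ * Gf α β t) = c₀ * ∫ t in (0:ℝ)..r, Gf α β t :=
      intervalIntegral.integral_const_mul c₀ _
    have hlow : Ff α β r - Ff α β 0 ≤ c₀ * rhoFJ α β r := by
      rw [hrho, ← hcm, ← ftcF α β hα 0 r]
      exact hmono1
    have hfinal_low : 1 / (2 * c₀) * L ≤ rhoFJ α β r := by
      rw [div_mul_eq_mul_div, div_le_iff₀ (by positivity)]
      have : L / 2 ≤ c₀ * rhoFJ α β r := by
        rw [hF0] at hlow
        linarith
      nlinarith
    -- UPPER BOUND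
    have hsplit : (∫ t in (0:ℝ)..r, Gf α β t) =
        (∫ t in (0:ℝ)..1, Gf α β t) + ∫ t in (1:ℝ)..r, Gf α β t :=
      (intervalIntegral.integral_add_adjacent_intervals (hGi 0 1) (hGi 1 r)).symm
    have hI1 : (∫ t in (0:ℝ)..1, Gf α β t) ≤ M := by
      have : (∫ t in (0:ℝ)..1, Gf α β t) ≤ ∫ _ in (0:ℝ)..1, M := by
        apply intervalIntegral.integral_mono_on (by norm_num) (hGi 0 1)
          intervalIntegrable_const
        intro t ht
        exact G01 α β hα hβ t ht
      simpa using this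
    have hmono2 : (∫ t in (1:ℝ)..r, c₀ * Gf α β t) ≤ ∫ t in (1:ℝ)..r, Real.sqrt 2 * Df α β t := by
      apply intervalIntegral.integral_mono_on hr1 ((hGi 1 r).const_mul c₀)
        ((hDi 1 r).const_mul (Real.sqrt 2))
      intro t ht
      exact up_pt α β hα hβ t ht.1
    have hI2 : c₀ * (∫ t in (1:ℝ)..r, Gf α β t) ≤ Real.sqrt 2 * (Ff α β r - Ff α β 1) := by
      calc c₀ * (∫ t in (1:ℝ)..r, Gf α β t) = ∫ t in (1:ℝ)..r, c₀ * Gf α β t :=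
        (intervalIntegral.integral_const_mul c₀ _).symm
      _ ≤ ∫ t in (1:ℝ)..r, Real.sqrt 2 * Df α β t := hmono2
      _ = Real.sqrt 2 * ∫ t in (1:ℝ)..r, Df α β t :=
        intervalIntegral.integral_const_mul _ _
      _ = Real.sqrt 2 * (Ff α β r - Ff α β 1) := by rw [ftcF α β hα 1 r]
    have hF1 : 0 ≤ Ff α β 1 := (Real.rpow_pos_of_pos (Apos α hα 1) _).le
    have hI2' : (∫ t in (1:ℝ)..r, Gf α β t) ≤ Real.sqrt 2 * 4 ^ k / c₀ * L := by
      have h1 : Ff α β r - Ff α β 1 ≤ 4 ^ k * L := by linarith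
      have h2 : Real.sqrt 2 * (Ff α β r - Ff α β 1) ≤ Real.sqrt 2 * (4 ^ k * L) :=
        mul_le_mul_of_nonneg_left h1 (Real.sqrt_nonneg 2)
      have h3 : c₀ * (∫ t in (1:ℝ)..r, Gf α β t) ≤ Real.sqrt 2 * (4 ^ k * L) := hI2.trans h2
      calc (∫ t in (1:ℝ)..r, Gf α β t) = c₀ * (∫ t in (1:ℝ)..r, Gf α β t) / c₀ :=
        (mul_div_cancel_left₀ _ hc₀pos.ne').symm
      _ ≤ Real.sqrt 2 * (4 ^ k * L) / c₀ := by gcongr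
      _ = Real.sqrt 2 * 4 ^ k / c₀ * L := by ring
    have : rhoFJ α β r ≤ M + Real.sqrt 2 * 4 ^ k / c₀ * L := by
      rw [hrho, hsplit]
      linarith
    constructor
    · exact hfinal_low
    · calc rhoFJ α β r ≤ M + Real.sqrt 2 * 4 ^ k / c₀ * L := this
      _ ≤ M * L + Real.sqrt 2 * 4 ^ k / c₀ * L := by nlinarith
      _ = (M + Real.sqrt 2 * 4 ^ k / c₀) * L := by ring
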